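/- Let C be a category with small colimits and D : J ⥤ C a small diagram with image presheaf im D. Then the colimit of the projection functor π : ∫ im D ⥤ C from the category of elements of im D exists and is isomorphic to the colimit of D. -/

import Mathlib

open CategoryTheory CategoryTheory.Limits

universe v u

section Aux
variable {J : Type v} [SmallCategory J] {C : Type u} [Category.{v} C] [HasColimits C]
    (D : J ⥤ C)

/-- The comparison map from the image presheaf to the presheaf represented by `colimit D`. -/
noncomputable def stmt5T : colimit (D ⋙ yoneda) ⟶ yoneda.obj (colimit D) :=
  colimit.desc (D ⋙ yoneda) ((Cocones.functoriality D yoneda).obj (colimit.cocone D))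

lemma stmt5T_app {c : Cᵒᵖ} (j : J) (f : c.unop ⟶ D.obj j) :
    (stmt5T D).app c ((colimit.ι (D ⋙ yoneda) j).app c f) = f ≫ colimit.ι D j := by
  rw [← FunctorToTypes.comp, stmt5T]
  erw [colimit.ι_desc]
  rfl

/-- The candidate colimit cocone on the projection from the category of elements. -/
noncomputable def stmt5Cocone :
    Cocone (CategoryOfElements.π (colimit (D ⋙ yoneda))).leftOp where
  pt := colimit D
  ι :=
    { app := fun e => (stmt5T D).app e.unop.1 e.unop.2
      naturality := fun e e' g => by
        obtain ⟨⟨c, x⟩⟩ := e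
        obtain ⟨⟨c', x'⟩⟩ := e'
        have hf := g.unop.2
        dsimp at hf ⊢
        have hn := NatTrans.naturality_apply (stmt5T D) g.unop.1 x'
        rw [hf] at hn
        dsimp at hn ⊢
        rw [hn]
        exact (Category.comp_id _).symm }

noncomputable def stmt5IsColimit : IsColimit (stmt5Cocone D) := by
  refine
    { desc := fun s => colimit.desc D
        { pt := s.pt
          ι :=
            { app := fun j => s.ι.app (Opposite.op
                ⟨Opposite.op (D.obj j), (colimit.ι (D ⋙ yoneda) j).app _ (𝟙 (D.obj j))⟩)
              naturality := fun j j' g => ?_ } }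
      fac := fun s e => ?_
      uniq := fun s m hm => ?_ }
  · -- naturality
    let a : (colimit (D ⋙ yoneda)).Elements :=
      ⟨Opposite.op (D.obj j), (colimit.ι (D ⋙ yoneda) j).app _ (𝟙 (D.obj j))⟩
    let b : (colimit (D ⋙ yoneda)).Elements :=
      ⟨Opposite.op (D.obj j'), (colimit.ι (D ⋙ yoneda) j').app _ (𝟙 (D.obj j'))⟩
    have hx : (colimit (D ⋙ yoneda)).map (D.map g).op b.2 = a.2 := by
      have := ConcreteCategory.congr_hom (NatTrans.congr_app (colimit.w (D ⋙ yoneda) g)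
        (Opposite.op (D.obj j))) (𝟙 (D.obj j))
      dsimp only [a, b]
      rw [← FunctorToTypes.naturality]
      simpa using this
    let φ : b ⟶ a := ⟨(D.map g).op, hx⟩
    have := s.w (Quiver.Hom.op φ)
    dsimp at this ⊢
    exact this.trans (Category.comp_id _).symm
  · -- fac
    obtain ⟨e⟩ := e
    obtain ⟨c, x⟩ := e
    obtain ⟨j, f, hf⟩ := Types.jointly_surjective
      ((D ⋙ yoneda) ⋙ (evaluation Cᵒᵖ (Type v)).obj c)
      (isColimitOfPreserves ((evaluation Cᵒᵖ (Type v)).obj c)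
        (colimit.isColimit (D ⋙ yoneda))) x
    dsimp at f hf
    subst hf
    let a : (colimit (D ⋙ yoneda)).Elements :=
      ⟨Opposite.op (D.obj j), (colimit.ι (D ⋙ yoneda) j).app _ (𝟙 (D.obj j))⟩
    have hx : (colimit (D ⋙ yoneda)).map f.op a.2 = (colimit.ι (D ⋙ yoneda) j).app c f := by
      have := NatTrans.naturality_apply (colimit.ι (D ⋙ yoneda) j) f.op (𝟙 (D.obj j))
      simpa using this.symm
    let φ : a ⟶ ⟨c, (colimit.ι (D ⋙ yoneda) j).app c f⟩ := ⟨f.op, hx⟩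
    have hw := s.w (Quiver.Hom.op φ)
    dsimp [stmt5Cocone] at hw ⊢
    rw [stmt5T_app]
    exact (Category.assoc _ _ _).trans ((congrArg _ (colimit.ι_desc _ _)).trans hw)
  · -- uniq
    refine colimit.hom_ext (F := D) (f := m) fun j => ?_
    have h := hm (Opposite.op
      ⟨Opposite.op (D.obj j), (colimit.ι (D ⋙ yoneda) j).app _ (𝟙 (D.obj j))⟩)
    dsimp [stmt5Cocone] at h
    rw [stmt5T_app] at h
    simp only [Category.id_comp] at h
    rw [colimit.ι_desc]
    exact h

end Aux

/-- If `C` has small colimits, then the colimit of the projection from the category of elements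
of the image presheaf of a small diagram `D : J ⥤ C` exists and is isomorphic to the colimit
of `D`. -/
theorem stmt5 {J : Type v} [SmallCategory J] {C : Type u} [Category.{v} C] [HasColimits C]
    (D : J ⥤ C) :
    ∃ _ : HasColimit (CategoryOfElements.π (colimit (D ⋙ yoneda))).leftOp,
      Nonempty (colimit (CategoryOfElements.π (colimit (D ⋙ yoneda))).leftOp ≅ colimit D) := by
  have h : HasColimit (CategoryOfElements.π (colimit (D ⋙ yoneda))).leftOp :=
    HasColimit.mk ⟨stmt5Cocone D, stmt5IsColimit D⟩
  exact ⟨h, ⟨colimit.isoColimitCocone ⟨stmt5Cocone D, stmt5IsColimit D⟩⟩⟩
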